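/- Let μ : X → ℝ be L-Lipschitz on a metric space X, let c ∈ X with estimate μ̂_c and confidence width ε_c satisfying |μ̂_c − μ_c| ≤ ε_c, and let a ∈ X with |μ̂_a − μ_a| ≤ ε_a. Suppose μ̂_c + 2ε_c < μ̂_a − ε_a. Then every b ∈ X with d(b, c) ≤ ε_c/L satisfies μ_b < μ_a. In particular, no arm in the ball B(c, ε_c/L) is optimal. -/
import Mathlib


/-- Correctness of the elimination rule: if μ̂_c + 2ε_c < μ̂_a − ε_a, then
every arm in the ball of radius ε_c/L around c has mean strictly below μ_a. -/
theorem stmt_8 {X : Type*} [MetricSpace X] (L : ℝ) (hL : 0 < L)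
    (μ : X → ℝ) (hμ : ∀ x y : X, |μ x - μ y| ≤ L * dist x y)
    (c a : X) (μhatc μhata εc εa : ℝ)
    (hconfc : |μhatc - μ c| ≤ εc) (hconfa : |μhata - μ a| ≤ εa)
    (helim : μhatc + 2 * εc < μhata - εa) :
    ∀ b : X, dist b c ≤ εc / L → μ b < μ a := by
  intro b hb
  have h1 : μ b - μ c ≤ L * dist b c := (abs_le.mp (hμ b c)).2
  have h2 : L * dist b c ≤ εc := by
    calc L * dist b c ≤ L * (εc / L) := by nlinarith
    _ = εc := by field_simp
  have h3 := abs_le.mp hconfc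
  have h4 := abs_le.mp hconfa
  linarith
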